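/- Let a, b ∈ ℝ and define the sequences x_1 = (a + √(a² + 8))/2, y_1 = (s + √(s² + 6))/2 where s = b − (|a| + √2)/2, and recursively x_{n+1} = (A_n + √(A_n² + 8))/2 with A_n = a − 1/y_n + 1/(x_n + y_n), y_{n+1} = (B_n + √(B_n² + 8))/2 with B_n = b − 1/x_n + 1/(x_n + y_n). Then the odd-indexed subsequences and even-indexed subsequences are interleaved monotone: for every n ≥ 1, x_{2n−1} > x_{2n+1}, x_{2n} < x_{2n+2}, y_{2n−1} < y_{2n+1}, and y_{2n} > y_{2n+2}. -/
import Mathlib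


/-- The iterative scheme of Proposition 4.2: `dysonSeq a b n = (x_{n+1}, y_{n+1})`,
i.e. `dysonSeq a b 0` is the pair `(x_1, y_1)` of the proposition. -/
noncomputable def dysonSeq (a b : ℝ) : ℕ → ℝ × ℝ
  | 0 =>
      ((a + Real.sqrt (a ^ 2 + 8)) / 2,
        ((b - (|a| + Real.sqrt 2) / 2)
          + Real.sqrt ((b - (|a| + Real.sqrt 2) / 2) ^ 2 + 6)) / 2)
  | n + 1 =>
      let p := dysonSeq a b n
      let A := a - 1 / p.2 + 1 / (p.1 + p.2)
      let B := b - 1 / p.1 + 1 / (p.1 + p.2)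
      ((A + Real.sqrt (A ^ 2 + 8)) / 2, (B + Real.sqrt (B ^ 2 + 8)) / 2)

noncomputable def dphi (c t : ℝ) : ℝ := (t + Real.sqrt (t ^ 2 + c)) / 2

lemma dphi_pos {c : ℝ} (hc : 0 < c) (t : ℝ) : 0 < dphi c t := by
  have h : |t| < Real.sqrt (t ^ 2 + c) := by
    rw [← Real.sqrt_sq_eq_abs]
    exact Real.sqrt_lt_sqrt (sq_nonneg t) (by linarith)
  have := neg_abs_le t
  unfold dphi; linarith

lemma dphi_quad {c : ℝ} (hc : 0 ≤ c) (t : ℝ) : dphi c t * (dphi c t - t) = c / 4 := by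
  have h : Real.sqrt (t ^ 2 + c) ^ 2 = t ^ 2 + c := Real.sq_sqrt (by positivity)
  unfold dphi; nlinarith [h]

lemma lt_dphi_self {c : ℝ} (hc : 0 < c) (t : ℝ) : t < dphi c t := by
  have h : t < Real.sqrt (t ^ 2 + c) := by
    rcases le_or_gt t 0 with ht | ht
    · exact lt_of_le_of_lt ht (Real.sqrt_pos.2 (by positivity))
    · exact (Real.lt_sqrt ht.le).2 (by linarith)
  unfold dphi; linarith

lemma dphi_lt_dphi {c : ℝ} (hc : 0 < c) {t t' : ℝ} (h : t < t') : dphi c t < dphi c t' := by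
  by_contra hle
  push_neg at hle
  have hq := dphi_quad hc.le t
  have hq' := dphi_quad hc.le t'
  have hp := dphi_pos hc t
  have hp' := dphi_pos hc t'
  have h1 := lt_dphi_self hc t
  have h2 := lt_dphi_self hc t'
  nlinarith [mul_pos hp' (sub_pos.2 h2)]

lemma lt_dphi {c u t : ℝ} (hc : 0 < c) (hu : 0 < u) (h : u * (u - t) < c / 4) :
    u < dphi c t := by
  by_contra hle
  push_neg at hle
  have hq := dphi_quad hc.le t
  have h1 := lt_dphi_self hc t
  have hp := dphi_pos hc t
  nlinarith

lemma Gmono {u u' v v' : ℝ} (hu : 0 < u) (hv : 0 < v) (hv' : 0 < v')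
    (h1 : u < u') (h2 : v' < v) : u / (v * (u + v)) < u' / (v' * (u' + v')) := by
  have hu' : 0 < u' := hu.trans h1
  rw [div_lt_div_iff₀ (by positivity) (by positivity)]
  nlinarith [mul_pos (mul_pos hu hu') (sub_pos.2 h2),
    mul_pos (sub_pos.2 h1) (mul_pos hv' hv'),
    mul_pos (mul_pos hu' (sub_pos.2 h2)) (by linarith : (0:ℝ) < v + v')]

lemma Gdiff {x y : ℝ} (hx : 0 < x) (hy : 0 < y) :
    1 / y - 1 / (x + y) = x / (y * (x + y)) := by
  field_simp
  try ring

/-- The order-reversal of the argument maps on positive pairs. -/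
lemma arg_reversal (a b x y x' y' : ℝ) (hx : 0 < x) (hy : 0 < y) (hx' : 0 < x')
    (hy' : 0 < y') (h1 : x < x') (h2 : y' < y) :
    (a - 1 / y' + 1 / (x' + y') < a - 1 / y + 1 / (x + y)) ∧
    (b - 1 / x + 1 / (x + y) < b - 1 / x' + 1 / (x' + y')) := by
  constructor
  · have hG : x / (y * (x + y)) < x' / (y' * (x' + y')) := Gmono hx hy hy' h1 h2
    rw [← Gdiff hx hy, ← Gdiff hx' hy'] at hG
    linarith
  · have hG : y' / (x' * (y' + x')) < y / (x * (y + x)) := Gmono hy' hx' hx h2 h1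
    rw [← Gdiff hy' hx', ← Gdiff hy hx] at hG
    rw [add_comm y' x'] at hG
    rw [add_comm y x] at hG
    linarith

lemma dysonSeq_succ (a b : ℝ) (n : ℕ) :
    dysonSeq a b (n + 1) =
      (dphi 8 (a - 1 / (dysonSeq a b n).2 + 1 / ((dysonSeq a b n).1 + (dysonSeq a b n).2)),
       dphi 8 (b - 1 / (dysonSeq a b n).1 + 1 / ((dysonSeq a b n).1 + (dysonSeq a b n).2))) :=
  rfl

lemma dysonSeq_zero (a b : ℝ) :
    dysonSeq a b 0 = (dphi 8 a, dphi 6 (b - (|a| + Real.sqrt 2) / 2)) := rfl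

lemma dyson_pos (a b : ℝ) : ∀ n, 0 < (dysonSeq a b n).1 ∧ 0 < (dysonSeq a b n).2 := by
  intro n
  induction n with
  | zero =>
      rw [dysonSeq_zero]
      exact ⟨dphi_pos (by norm_num) _, dphi_pos (by norm_num) _⟩
  | succ n ih =>
      rw [dysonSeq_succ]
      exact ⟨dphi_pos (by norm_num) _, dphi_pos (by norm_num) _⟩

/-- One application of the map reverses the interleaving order. -/
lemma oneStep (a b : ℝ) (m k : ℕ)
    (h1 : (dysonSeq a b m).1 < (dysonSeq a b k).1)
    (h2 : (dysonSeq a b k).2 < (dysonSeq a b m).2) :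
    (dysonSeq a b (k + 1)).1 < (dysonSeq a b (m + 1)).1 ∧
    (dysonSeq a b (m + 1)).2 < (dysonSeq a b (k + 1)).2 := by
  obtain ⟨hxm, hym⟩ := dyson_pos a b m
  obtain ⟨hxk, hyk⟩ := dyson_pos a b k
  obtain ⟨hA, hB⟩ := arg_reversal a b (dysonSeq a b m).1 (dysonSeq a b m).2
    (dysonSeq a b k).1 (dysonSeq a b k).2 hxm hym hxk hyk h1 h2
  rw [dysonSeq_succ a b m, dysonSeq_succ a b k]
  exact ⟨dphi_lt_dphi (by norm_num) hA, dphi_lt_dphi (by norm_num) hB⟩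

/-- The hard half of the base case: `y₁ < y₃`. -/
lemma base_y (a b s A1 B2 x1 y1 x2 y2 : ℝ)
    (hs : s = b - (|a| + Real.sqrt 2) / 2)
    (hA1 : A1 = a - 1 / y1 + 1 / (x1 + y1))
    (hB2 : B2 = b - 1 / x2 + 1 / (x2 + y2))
    (hx1e : x1 = dphi 8 a) (hy1e : y1 = dphi 6 s) (hx2e : x2 = dphi 8 A1)
    (hx1 : 0 < x1) (hy1 : 0 < y1) (hx2 : 0 < x2) (hy2 : 0 < y2) :
    y1 < dphi 8 B2 := by
  have hq1 : y1 * (y1 - s) = 3 / 2 := by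
    rw [hy1e]
    have := dphi_quad (by norm_num : (0:ℝ) ≤ 6) s
    linarith
  have hq2 : x2 * (x2 - A1) = 2 := by
    rw [hx2e]
    have := dphi_quad (by norm_num : (0:ℝ) ≤ 8) A1
    linarith
  have hinv : 1 / x2 = (x2 - A1) / 2 := by
    rw [div_eq_div_iff hx2.ne' (by norm_num : (2:ℝ) ≠ 0)]
    linear_combination -hq2
  have hA1a : A1 < a := by
    have h5 : 1 / (x1 + y1) < 1 / y1 := one_div_lt_one_div_of_lt hy1 (by linarith)
    rw [hA1]; linarith
  have hx2x1 : x2 < x1 := by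
    rw [hx2e, hx1e]; exact dphi_lt_dphi (by norm_num) hA1a
  have hsq : Real.sqrt (a ^ 2 + 8) ≤ |a| + 2 * Real.sqrt 2 := by
    have h2 : Real.sqrt 2 ^ 2 = 2 := Real.sq_sqrt (by norm_num)
    have h3 : (0:ℝ) ≤ |a| + 2 * Real.sqrt 2 := by positivity
    rw [← Real.sqrt_sq h3]
    apply Real.sqrt_le_sqrt
    have h4 := abs_nonneg a
    have h5 := Real.sqrt_nonneg 2
    nlinarith [sq_abs a]
  have hx1a : x1 - a ≤ |a| + Real.sqrt 2 := by
    have h6 := neg_abs_le a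
    rw [hx1e]
    unfold dphi
    linarith
  have hB2s : s - 1 / (2 * y1) < B2 := by
    have p1 : (0:ℝ) < 1 / (x2 + y2) := by positivity
    have p2 : (0:ℝ) < 1 / (x1 + y1) := by positivity
    have e1 : 1 / (2 * y1) = (1 / y1) / 2 := by
      rw [one_div, one_div, mul_inv]; ring
    rw [hB2, hinv, hA1, hs, e1]
    linarith
  have h8 : y1 * (1 / (2 * y1)) = 1 / 2 := by
    rw [mul_one_div, div_eq_div_iff (mul_pos (by norm_num : (0:ℝ) < 2) hy1).ne'
      (by norm_num : (2:ℝ) ≠ 0)]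
    ring
  have hfin : y1 * (y1 - B2) < 2 := by
    have h7 : y1 * (s - 1 / (2 * y1)) < y1 * B2 := mul_lt_mul_of_pos_left hB2s hy1
    nlinarith [hq1, h7, h8]
  exact lt_dphi (by norm_num) hy1 (by linarith)

/-- Step 3 of the proof of Proposition 4.2. With the
convention `x_m = (dysonSeq a b (m-1)).1` and `y_m = (dysonSeq a b (m-1)).2`,
for every `n ≥ 1`: `x_{2n-1} > x_{2n+1}`, `x_{2n} < x_{2n+2}`,
`y_{2n-1} < y_{2n+1}` and `y_{2n} > y_{2n+2}`. -/
theorem dysonSeq_interleaved_monotone (a b : ℝ) :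
    ∀ n : ℕ, 1 ≤ n →
      (dysonSeq a b (2 * n - 2)).1 > (dysonSeq a b (2 * n)).1 ∧
      (dysonSeq a b (2 * n - 1)).1 < (dysonSeq a b (2 * n + 1)).1 ∧
      (dysonSeq a b (2 * n - 2)).2 < (dysonSeq a b (2 * n)).2 ∧
      (dysonSeq a b (2 * n - 1)).2 > (dysonSeq a b (2 * n + 1)).2 := by
  have base : (dysonSeq a b 2).1 < (dysonSeq a b 0).1 ∧
      (dysonSeq a b 0).2 < (dysonSeq a b 2).2 := by
    obtain ⟨hx1, hy1⟩ := dyson_pos a b 0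
    obtain ⟨hx2, hy2⟩ := dyson_pos a b 1
    constructor
    · -- x₃ < x₁
      rw [show (dysonSeq a b 2) = dysonSeq a b (1 + 1) from rfl, dysonSeq_succ a b 1,
        dysonSeq_zero]
      apply dphi_lt_dphi (by norm_num)
      have h5 : 1 / ((dysonSeq a b 1).1 + (dysonSeq a b 1).2) < 1 / (dysonSeq a b 1).2 :=
        one_div_lt_one_div_of_lt hy2 (by linarith)
      have h6 : (0:ℝ) < 1 / (dysonSeq a b 1).2 := by positivity
      linarith
    · -- y₁ < y₃
      rw [show (dysonSeq a b 2) = dysonSeq a b (1 + 1) from rfl, dysonSeq_succ a b 1]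
      have e0 := dysonSeq_zero a b
      exact base_y a b (b - (|a| + Real.sqrt 2) / 2)
        (a - 1 / (dysonSeq a b 0).2 + 1 / ((dysonSeq a b 0).1 + (dysonSeq a b 0).2))
        (b - 1 / (dysonSeq a b 1).1 + 1 / ((dysonSeq a b 1).1 + (dysonSeq a b 1).2))
        (dysonSeq a b 0).1 (dysonSeq a b 0).2 (dysonSeq a b 1).1 (dysonSeq a b 1).2
        rfl rfl rfl
        (by rw [e0]) (by rw [e0]) (by rw [dysonSeq_succ a b 0])
        hx1 hy1 hx2 hy2
  have Q : ∀ m : ℕ, (dysonSeq a b (2 * m + 2)).1 < (dysonSeq a b (2 * m)).1 ∧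
      (dysonSeq a b (2 * m)).2 < (dysonSeq a b (2 * m + 2)).2 := by
    intro m
    induction m with
    | zero => simpa using base
    | succ m ih =>
        obtain ⟨h1, h2⟩ := ih
        obtain ⟨h3, h4⟩ := oneStep a b (2 * m + 2) (2 * m) h1 h2
        obtain ⟨h5, h6⟩ := oneStep a b (2 * m + 1) (2 * m + 3) h3 h4
        have e1 : 2 * (m + 1) + 2 = 2 * m + 3 + 1 := by ring
        have e2 : 2 * (m + 1) = 2 * m + 1 + 1 := by ring
        rw [e1, e2]
        exact ⟨h5, h6⟩
  intro n hn
  obtain ⟨m, rfl⟩ : ∃ m, n = m + 1 := ⟨n - 1, by omega⟩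
  obtain ⟨h1, h2⟩ := Q m
  obtain ⟨h3, h4⟩ := oneStep a b (2 * m + 2) (2 * m) h1 h2
  have e1 : 2 * (m + 1) - 2 = 2 * m := by omega
  have e3 : 2 * (m + 1) - 1 = 2 * m + 1 := by omega
  have e4 : 2 * (m + 1) + 1 = 2 * m + 2 + 1 := by omega
  have e2 : 2 * (m + 1) = 2 * m + 2 := by omega
  rw [e1, e3, e4, e2]
  exact ⟨h1, h3, h2, h4⟩
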